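/- Let T be a finite tree and for each i let l_i denote the number of vertices of T of degree i. Any set E' of edges (pairs of non-adjacent vertices of T) whose addition to T yields an r-vertex-connected graph satisfies |E'| ≥ ⌈(1/2) · Σ_{i=1}^{r-1} (r-i)·l_i ⌉. -/

import Mathlib

open SimpleGraph Finset
open scoped Classical

def SimpleGraph.IsVertexConnected {V : Type*} [Fintype V] (G : SimpleGraph V) (r : ℕ) : Prop :=
  r < Fintype.card V ∧
    ∀ S : Finset V, S.card < r → (SimpleGraph.induce ((↑S : Set V)ᶜ) G).Connected

lemma reachable_ne_exists_adj {V : Type*} {G : SimpleGraph V} {v w : V}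
    (h : G.Reachable v w) (hne : v ≠ w) : ∃ u, G.Adj v u := by
  obtain ⟨p⟩ := h
  cases p with
  | nil => exact absurd rfl hne
  | cons ha _ => exact ⟨_, ha⟩

lemma min_degree_of_isVertexConnected {V : Type*} [Fintype V] (G : SimpleGraph V)
    [DecidableRel G.Adj] {r : ℕ} (h : G.IsVertexConnected r) (v : V) : r ≤ G.degree v := by
  classical
  by_contra hlt
  push_neg at hlt
  set S := G.neighborFinset v with hS
  have hcard : S.card < r := by rwa [hS, card_neighborFinset_eq_degree]
  have hconn := h.2 S hcard
  have hv : v ∈ ((↑S : Set V)ᶜ) := by simp [hS]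
  have hne : ((insert v S)ᶜ : Finset V).Nonempty := by
    rw [← Finset.card_pos, Finset.card_compl]
    have h1 : (insert v S).card ≤ S.card + 1 := Finset.card_insert_le _ _
    have h2 := h.1
    omega
  obtain ⟨w, hw⟩ := hne
  rw [Finset.mem_compl, Finset.mem_insert] at hw
  push_neg at hw
  have hwS : w ∈ ((↑S : Set V)ᶜ) := by simpa using hw.2
  have hr : (SimpleGraph.induce ((↑S : Set V)ᶜ) G).Reachable ⟨v, hv⟩ ⟨w, hwS⟩ :=
    hconn.preconnected _ _
  obtain ⟨u, hu⟩ := reachable_ne_exists_adj hr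
    (by intro hh; exact hw.1 (congrArg Subtype.val hh).symm)
  have hadj : G.Adj v u.1 := hu
  have hmem : u.1 ∈ S := (G.mem_neighborFinset v u.1).mpr hadj
  exact u.2 hmem

theorem tree_augmentation_lower_bound {V : Type*} [Fintype V] (T : SimpleGraph V)
    (hT : T.IsTree) (r : ℕ) (hr : 2 ≤ r) (hrn : r < Fintype.card V)
    (E' : Finset (Sym2 V))
    (hE : ∀ e ∈ E', e ∉ T.edgeSet ∧ ¬ e.IsDiag)
    (hconn : (SimpleGraph.fromEdgeSet (T.edgeSet ∪ (↑E' : Set (Sym2 V)))).IsVertexConnected r) :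
    ((∑ i ∈ Finset.Icc 1 (r - 1),
        (r - i) * (Finset.univ.filter (fun v : V => T.degree v = i)).card) + 1) / 2
      ≤ E'.card := by
  classical
  set G := SimpleGraph.fromEdgeSet (T.edgeSet ∪ (↑E' : Set (Sym2 V))) with hG
  -- every vertex of T has positive degree
  have hdegpos : ∀ v : V, 0 < T.degree v := by
    intro v
    have h1 : 1 < Fintype.card V := by omega
    obtain ⟨w, hw⟩ := Fintype.exists_ne_of_one_lt_card h1 v
    obtain ⟨u, hu⟩ := reachable_ne_exists_adj (hT.isConnected.preconnected w v).symm hw.symm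
    rw [T.degree_pos_iff_exists_adj]
    exact ⟨u, hu⟩
  -- degree bound in G
  have hdegG : ∀ v : V, G.degree v ≤ T.degree v + (E'.filter (fun e => v ∈ e)).card := by
    intro v
    have hsub : G.neighborFinset v ⊆
        T.neighborFinset v ∪ (univ.filter fun u => s(v, u) ∈ E') := by
      intro u hu
      rw [mem_neighborFinset] at hu
      rw [hG, fromEdgeSet_adj] at hu
      rcases hu.1 with h | h
      · rw [Finset.mem_union, mem_neighborFinset]
        exact Or.inl (T.mem_edgeSet.mp h)
      · rw [Finset.mem_union]
        right
        simp only [Finset.mem_filter, Finset.mem_univ, true_and]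
        exact_mod_cast h
    have h2 : (univ.filter fun u => s(v, u) ∈ E').card ≤
        (E'.filter (fun e => v ∈ e)).card := by
      apply Finset.card_le_card_of_injOn (fun u => s(v, u))
      · intro u hu
        simp only [Finset.mem_coe, Finset.mem_filter, Finset.mem_univ, true_and] at hu ⊢
        exact ⟨hu, Sym2.mem_mk_left _ _⟩
      · intro a _ b _ hab
        rw [Sym2.eq_iff] at hab
        rcases hab with ⟨_, h⟩ | ⟨h1, h2⟩
        · exact h
        · exact h2.trans h1
    calc G.degree v = (G.neighborFinset v).card := (G.card_neighborFinset_eq_degree v).symm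
      _ ≤ (T.neighborFinset v ∪ (univ.filter fun u => s(v, u) ∈ E')).card :=
          Finset.card_le_card hsub
      _ ≤ (T.neighborFinset v).card + (univ.filter fun u => s(v, u) ∈ E').card :=
          Finset.card_union_le _ _
      _ ≤ T.degree v + (E'.filter (fun e => v ∈ e)).card := by
          rw [T.card_neighborFinset_eq_degree]; omega
  -- double counting
  have hsum2 : ∑ v : V, (E'.filter (fun e => v ∈ e)).card = 2 * E'.card := by
    simp_rw [Finset.card_filter]
    rw [Finset.sum_comm]
    have : ∀ e ∈ E', (∑ v : V, if v ∈ e then 1 else 0) = 2 := by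
      intro e he
      obtain ⟨a, b⟩ := e
      have hab : a ≠ b := by
        have := (hE _ he).2
        simpa [Sym2.isDiag_iff_proj_eq] using this
      rw [← Finset.card_filter]
      have : (univ.filter fun v : V => v ∈ s(a, b)) = {a, b} := by
        ext v; simp [Sym2.mem_iff]
      rw [this, Finset.card_insert_of_notMem (by simpa using hab), Finset.card_singleton]
    rw [Finset.sum_congr rfl this, Finset.sum_const, smul_eq_mul, mul_comm]
  -- key per-vertex inequality
  have key : ∀ v : V, r - T.degree v ≤ (E'.filter (fun e => v ∈ e)).card := by
    intro v
    have h1 := min_degree_of_isVertexConnected G hconn v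
    have h2 := hdegG v
    omega
  -- rewrite the LHS sum
  have hS : (∑ i ∈ Finset.Icc 1 (r - 1),
      (r - i) * (Finset.univ.filter (fun v : V => T.degree v = i)).card)
      = ∑ v : V, (r - T.degree v) := by
    have step1 : ∀ i ∈ Finset.Icc 1 (r - 1),
        (r - i) * (Finset.univ.filter (fun v : V => T.degree v = i)).card
        = ∑ v ∈ Finset.univ.filter (fun v : V => T.degree v = i), (r - T.degree v) := by
      intro i _
      rw [Finset.sum_congr rfl (fun v hv => by rw [(Finset.mem_filter.mp hv).2]),
        Finset.sum_const, smul_eq_mul, mul_comm]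
    rw [Finset.sum_congr rfl step1,
      Finset.sum_fiberwise_eq_sum_filter univ (Finset.Icc 1 (r - 1))
        (fun v : V => T.degree v) (fun v => r - T.degree v)]
    apply Finset.sum_filter_of_ne
    intro v _ hv
    have := hdegpos v
    rw [Finset.mem_Icc]
    omega
  have hle : (∑ v : V, (r - T.degree v)) ≤ 2 * E'.card := by
    rw [← hsum2]
    exact Finset.sum_le_sum fun v _ => key v
  rw [hS]
  omega
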